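/- Let |Ψ⟩ := |QRF(α,β,δ)⟩ ⊗ |ψ⁻⟩ ∈ (ℂ²)^{⊗4}, where |QRF(α,β,δ)⟩ = cos α |0⟩⊗(cos(β/2)|0⟩ + e^{iδ} sin(β/2)|1⟩) + sin α |1⟩⊗(sin(β/2)|0⟩ − e^{−iδ} cos(β/2)|1⟩) occupies qubits 1,2 and the singlet |ψ⁻⟩ = (|01⟩−|10⟩)/√2 occupies qubits 3,4. Let Π_2 be the orthogonal projector onto the span of (|010⟩−|100⟩)/√2, (2|001⟩−|010⟩−|100⟩)/√6, (|011⟩−|101⟩)/√2, (−2|110⟩+|101⟩+|011⟩)/√6 in the first three qubits. Then the probability of projecting onto the J=1/2 sector is ⟨Ψ|(Π_2 ⊗ I₂)|Ψ⟩ = 1/2 − (1/6)(cos β − 2 cos α cos β cos δ sin α + cos δ sin 2α), and correspondingly ⟨Ψ|((I₈ − Π_2) ⊗ I₂)|Ψ⟩ = 1/2 + (1/6)(cos β − 2 cos α cos β cos δ sin α + cos δ sin 2α). -/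

import Mathlib

open Matrix Kronecker

/-- The index type of `(ℂ²)^{⊗3} ≅ ℂ⁸`. -/
abbrev Q3 : Type := Fin 2 × Fin 2 × Fin 2

/-- The Pauli matrices `σ_x, σ_y, σ_z`. -/
def pauli : Fin 3 → Matrix (Fin 2) (Fin 2) ℂ :=
  ![!![0, 1; 1, 0], !![0, -Complex.I; Complex.I, 0], !![1, 0; 0, -1]]

/-- `J_a^k := (1/2)σ_k` acting on the `a`-th of three qubits (identity elsewhere). -/
noncomputable def J : Fin 3 → Fin 3 → Matrix Q3 Q3 ℂ :=
  ![fun k => ((1 / 2 : ℂ) • pauli k) ⊗ₖ ((1 : Matrix (Fin 2) (Fin 2) ℂ) ⊗ₖ (1 : Matrix (Fin 2) (Fin 2) ℂ)),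
    fun k => (1 : Matrix (Fin 2) (Fin 2) ℂ) ⊗ₖ (((1 / 2 : ℂ) • pauli k) ⊗ₖ (1 : Matrix (Fin 2) (Fin 2) ℂ)),
    fun k => (1 : Matrix (Fin 2) (Fin 2) ℂ) ⊗ₖ ((1 : Matrix (Fin 2) (Fin 2) ℂ) ⊗ₖ ((1 / 2 : ℂ) • pauli k))]

/-- Dot product `J_a · J_b := ∑_k J_a^k J_b^k`. -/
noncomputable def Jdot (a b : Fin 3) : Matrix Q3 Q3 ℂ := ∑ k : Fin 3, J a k * J b k

/-- The Levi-Civita symbol on `{0,1,2}` (as a complex number). -/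
def levi (k l m : Fin 3) : ℂ :=
  if (k, l, m) = (0, 1, 2) ∨ (k, l, m) = (1, 2, 0) ∨ (k, l, m) = (2, 0, 1) then 1
  else if (k, l, m) = (0, 2, 1) ∨ (k, l, m) = (2, 1, 0) ∨ (k, l, m) = (1, 0, 2) then -1
  else 0

/-- The cross-product expression `(J_a × J_b) · J_c := ∑_{klm} ε_{klm} J_a^k J_b^l J_c^m`. -/
noncomputable def Jcross (a b c : Fin 3) : Matrix Q3 Q3 ℂ :=
  ∑ k : Fin 3, ∑ l : Fin 3, ∑ m : Fin 3, levi k l m • (J a k * J b l * J c m)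

/-- The computational basis ket `|abc⟩` of three qubits, as a vector in `ℂ⁸`. -/
def ket3 (a b c : Fin 2) : Q3 → ℂ := fun x => if x = (a, b, c) then 1 else 0

noncomputable def sectorBasis : Fin 8 → (Q3 → ℂ) :=
  ![ket3 0 0 0,
    (Real.sqrt 3 : ℂ)⁻¹ • (ket3 0 0 1 + ket3 0 1 0 + ket3 1 0 0),
    (Real.sqrt 3 : ℂ)⁻¹ • (ket3 1 1 0 + ket3 1 0 1 + ket3 0 1 1),
    ket3 1 1 1,
    (Real.sqrt 2 : ℂ)⁻¹ • (ket3 0 1 0 - ket3 1 0 0),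
    (Real.sqrt 6 : ℂ)⁻¹ • ((2 : ℂ) • ket3 0 0 1 - ket3 0 1 0 - ket3 1 0 0),
    (Real.sqrt 2 : ℂ)⁻¹ • (ket3 0 1 1 - ket3 1 0 1),
    (Real.sqrt 6 : ℂ)⁻¹ • ((-2 : ℂ) • ket3 1 1 0 + ket3 1 0 1 + ket3 0 1 1)]

/-- The total angular momentum squared `J²_tot := ∑_k (J_1^k + J_2^k + J_3^k)²`. -/
noncomputable def J2tot : Matrix Q3 Q3 ℂ :=
  ∑ k : Fin 3, (J 0 k + J 1 k + J 2 k) * (J 0 k + J 1 k + J 2 k)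


/-- The orthogonal projector `Π₂` onto the total angular momentum `J = 1/2`
sector of three qubits, the span of the orthonormal vectors `|1/2,0,0⟩,
|1/2,0,1⟩, |1/2,1,0⟩, |1/2,1,1⟩`. -/
noncomputable def Pi2 : Matrix Q3 Q3 ℂ :=
  ∑ i : Fin 8, if 4 ≤ (i : ℕ) then
    Matrix.vecMulVec (sectorBasis i) (star (sectorBasis i)) else 0

/-- The index type of `(ℂ²)^{⊗4}`. -/
abbrev Q4 : Type := Fin 2 × Fin 2 × Fin 2 × Fin 2

/-- The canonical primitive quantum reference frame state
`|QRF(α,β,δ)⟩ = cos α |0⟩⊗(cos(β/2)|0⟩ + e^{iδ} sin(β/2)|1⟩)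
 + sin α |1⟩⊗(sin(β/2)|0⟩ − e^{−iδ} cos(β/2)|1⟩)` on two qubits. -/
noncomputable def qrfVec (α β δ : ℝ) : Fin 2 × Fin 2 → ℂ := fun x =>
  if x = (0, 0) then Real.cos α * Real.cos (β / 2)
  else if x = (0, 1) then Real.cos α * Complex.exp (Complex.I * δ) * Real.sin (β / 2)
  else if x = (1, 0) then Real.sin α * Real.sin (β / 2)
  else -(Real.sin α * Complex.exp (-(Complex.I * δ)) * Real.cos (β / 2))

/-- The singlet state `|ψ⁻⟩ = (|01⟩ − |10⟩)/√2` on two qubits. -/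
noncomputable def singletVec : Fin 2 × Fin 2 → ℂ := fun x =>
  if x = (0, 1) then (Real.sqrt 2 : ℂ)⁻¹
  else if x = (1, 0) then -(Real.sqrt 2 : ℂ)⁻¹ else 0

/-- The four-qubit state `|Ψ⟩ = |QRF(α,β,δ)⟩ ⊗ |ψ⁻⟩` (reference frame on
qubits 1,2 and singlet on qubits 3,4). -/
noncomputable def totalVec (α β δ : ℝ) : Q4 → ℂ := fun x =>
  qrfVec α β δ (x.1, x.2.1) * singletVec (x.2.2.1, x.2.2.2)

/-- The projector `Π₂ ⊗ I₂` acting as `Π₂` on qubits 1,2,3 and as the identity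
on qubit 4. -/
noncomputable def Pi2ext : Matrix Q4 Q4 ℂ :=
  Matrix.of fun x y =>
    Pi2 (x.1, x.2.1, x.2.2.1) (y.1, y.2.1, y.2.2.1) *
      (if x.2.2.2 = y.2.2.2 then 1 else 0)

/-! ### Auxiliary lemmas -/

private lemma aux_h2t : (((Real.sqrt 2 : ℝ) : ℂ))⁻¹ * (((Real.sqrt 2 : ℝ) : ℂ))⁻¹ = 1/2 := by
  rw [← mul_inv, ← Complex.ofReal_mul, Real.mul_self_sqrt (by norm_num)]; norm_num
private lemma aux_h6t : (((Real.sqrt 6 : ℝ) : ℂ))⁻¹ * (((Real.sqrt 6 : ℝ) : ℂ))⁻¹ = 1/6 := by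
  rw [← mul_inv, ← Complex.ofReal_mul, Real.mul_self_sqrt (by norm_num)]; norm_num
private lemma aux_sq2 : ((Real.sqrt 2 : ℝ) : ℂ)^2 = 2 := by
  rw [sq, ← Complex.ofReal_mul, Real.mul_self_sqrt (by norm_num)]; norm_num
private lemma aux_sq6 : ((Real.sqrt 6 : ℝ) : ℂ)^2 = 6 := by
  rw [sq, ← Complex.ofReal_mul, Real.mul_self_sqrt (by norm_num)]; norm_num
private lemma aux_hi2 : (((Real.sqrt 2 : ℝ) : ℂ))⁻¹^2 = 1/2 := by
  rw [inv_pow, aux_sq2]; norm_num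
private lemma aux_hi6 : (((Real.sqrt 6 : ℝ) : ℂ))⁻¹^2 = 1/6 := by
  rw [inv_pow, aux_sq6]; norm_num

/-- Weight (number of 1's) of a three-qubit basis index. -/
def auxWt (x : Q3) : ℕ := x.1.val + x.2.1.val + x.2.2.val

/-- Explicit closed form of the projector `Π₂`. -/
noncomputable def Pi2explicit : Matrix Q3 Q3 ℂ := Matrix.of fun x y =>
  if x = y then (if auxWt x = 0 ∨ auxWt x = 3 then 0 else 2/3)
  else if auxWt x = auxWt y then -(1/3) else 0

set_option maxHeartbeats 4000000 in
lemma Pi2_eq_explicit : Pi2 = Pi2explicit := by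
  funext x y
  fin_cases x <;> fin_cases y <;>
  · simp only [Pi2, Matrix.sum_apply, Fin.sum_univ_succ, Fin.sum_univ_zero, sectorBasis,
      Matrix.cons_val_zero, Matrix.cons_val_one, Matrix.head_cons, Matrix.zero_apply,
      Fin.isValue, Nat.reduceLeDiff, if_true, if_false, Fin.val_zero, Fin.val_one,
      zero_add, add_zero, Matrix.cons_val_succ, Fin.val_succ]
    norm_num [Matrix.vecMulVec_apply, Pi.star_apply, Pi.smul_apply, Pi.add_apply,
      Pi.sub_apply, ket3, Pi2explicit, auxWt, smul_eq_mul, star_mul', Complex.star_def,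
      Complex.conj_ofReal, Prod.ext_iff, Prod.fst_zero, Prod.snd_zero]
    try (ring_nf; norm_num [aux_h2t, aux_h6t, aux_sq2, aux_sq6, aux_hi2, aux_hi6])

private lemma totalVec_norm (α β δ : ℝ) :
    star (totalVec α β δ) ⬝ᵥ (totalVec α β δ) = 1 := by
  have hEE : Complex.exp (Complex.I * (δ:ℂ)) * Complex.exp (-(Complex.I * (δ:ℂ))) = 1 := by
    rw [← Complex.exp_add]; norm_num
  have hpa : Complex.sin (α:ℂ)^2 + Complex.cos (α:ℂ)^2 = 1 := Complex.sin_sq_add_cos_sq _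
  have hpb : Complex.sin ((β:ℂ)/2)^2 + Complex.cos ((β:ℂ)/2)^2 = 1 := Complex.sin_sq_add_cos_sq _
  simp only [dotProduct, Fintype.sum_prod_type, Fin.sum_univ_succ,
    Fin.sum_univ_zero, totalVec, qrfVec, singletVec,
    Pi.star_apply, Prod.ext_iff, Prod.fst_zero, Prod.snd_zero, Fin.ext_iff]
  norm_num [star_mul', Complex.star_def, Complex.conj_ofReal, _root_.map_mul,
    ← Complex.exp_conj, Complex.conj_I, ← Complex.cos_conj, ← Complex.sin_conj,
    map_div₀, map_ofNat]
  set c1 := Complex.cos (α:ℂ)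
  set s1 := Complex.sin (α:ℂ)
  set c2 := Complex.cos ((β:ℂ)/2)
  set s2 := Complex.sin ((β:ℂ)/2)
  set E := Complex.exp (Complex.I * (δ:ℂ))
  set E' := Complex.exp (-(Complex.I * (δ:ℂ)))
  linear_combination
    (2*(c1^2*c2^2 + c1^2*s2^2*E*E' + s1^2*s2^2 + s1^2*c2^2*E*E')) * aux_h2t
    + (c1^2*s2^2 + s1^2*c2^2) * hEE
    + (c2^2 + s2^2) * hpa
    + hpb

set_option maxHeartbeats 1000000 in
private lemma first_prob (α β δ : ℝ) :
    star (totalVec α β δ) ⬝ᵥ (Pi2ext.mulVec (totalVec α β δ)) =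
      ((1 / 2 - (1 / 6) * (Real.cos β - 2 * Real.cos α * Real.cos β * Real.cos δ * Real.sin α +
        Real.cos δ * Real.sin (2 * α)) : ℝ) : ℂ) := by
  have hEE : Complex.exp (Complex.I * (δ:ℂ)) * Complex.exp (-(Complex.I * (δ:ℂ))) = 1 := by
    rw [← Complex.exp_add]; norm_num
  have he1 : Complex.exp (Complex.I * (δ:ℂ)) = Complex.cos δ + Complex.sin δ * Complex.I := by
    rw [mul_comm, Complex.exp_mul_I]
  have he2 : Complex.exp (-(Complex.I * (δ:ℂ))) = Complex.cos δ - Complex.sin δ * Complex.I := by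
    rw [show -(Complex.I * (δ:ℂ)) = (-(δ:ℂ)) * Complex.I by ring, Complex.exp_mul_I,
      Complex.cos_neg, Complex.sin_neg]; ring
  have hc : Complex.exp (Complex.I * (δ:ℂ)) + Complex.exp (-(Complex.I * (δ:ℂ)))
      = 2 * Complex.cos (δ:ℂ) := by rw [he1, he2]; ring
  have hpa : Complex.sin (α:ℂ)^2 + Complex.cos (α:ℂ)^2 = 1 := Complex.sin_sq_add_cos_sq _
  have hpb : Complex.sin ((β:ℂ)/2)^2 + Complex.cos ((β:ℂ)/2)^2 = 1 := Complex.sin_sq_add_cos_sq _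
  have hb2 : Complex.cos (β:ℂ) = 2 * Complex.cos ((β:ℂ)/2)^2 - 1 := by
    rw [show ((β:ℂ)) = 2*((β:ℂ)/2) by ring, Complex.cos_two_mul]; ring_nf
  have ha : Complex.sin (2*(α:ℂ)) = 2 * Complex.sin (α:ℂ) * Complex.cos (α:ℂ) :=
    Complex.sin_two_mul _
  simp only [dotProduct, Matrix.mulVec, Fintype.sum_prod_type, Fin.sum_univ_succ,
    Fin.sum_univ_zero, Pi2ext, Pi2_eq_explicit, Pi2explicit, auxWt, totalVec, qrfVec,
    singletVec, Matrix.of_apply,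
    Pi.star_apply, Prod.ext_iff, Prod.fst_zero, Prod.snd_zero, Fin.ext_iff]
  norm_num [star_mul', Complex.star_def, Complex.conj_ofReal, _root_.map_mul,
    ← Complex.exp_conj, Complex.conj_I, ← Complex.cos_conj, ← Complex.sin_conj,
    map_div₀, map_ofNat]
  set c1 := Complex.cos (α:ℂ)
  set s1 := Complex.sin (α:ℂ)
  set c2 := Complex.cos ((β:ℂ)/2)
  set s2 := Complex.sin ((β:ℂ)/2)
  set cd := Complex.cos (δ:ℂ)
  set E := Complex.exp (Complex.I * (δ:ℂ))
  set E' := Complex.exp (-(Complex.I * (δ:ℂ)))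
  set cb := Complex.cos (β:ℂ)
  set sa := Complex.sin (2*(α:ℂ))
  linear_combination
    ((2/3)*c1^2*c2^2 + (4/3)*c1^2*s2^2*E*E' - (2/3)*c1*s1*s2^2*(E+E')
      + (4/3)*s1^2*s2^2 + (2/3)*s1^2*c2^2*E*E') * aux_h2t
    + ((2/3)*c1^2*s2^2 + (1/3)*s1^2*c2^2) * hEE
    + (-(1/3)*c1*s1*s2^2) * hc
    + ((1/6) - (1/3)*c1*cd*s1) * hb2
    + ((1/6)*cd) * ha
    + ((1/3)*c2^2 + (2/3)*s2^2) * hpa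
    + (2/3 - (2/3)*c1*s1*cd) * hpb


/-- The probability of projecting `|Ψ⟩ = |QRF(α,β,δ)⟩ ⊗ |ψ⁻⟩` onto the `J = 1/2`
sector is `⟨Ψ|(Π₂ ⊗ I₂)|Ψ⟩ = 1/2 − (1/6)(cos β − 2 cos α cos β cos δ sin α + cos δ sin 2α)`,
and onto its complement `⟨Ψ|((I₈ − Π₂) ⊗ I₂)|Ψ⟩ = 1/2 + (1/6)(…)`. -/
theorem sector_projection_probabilities (α β δ : ℝ) :
    star (totalVec α β δ) ⬝ᵥ (Pi2ext.mulVec (totalVec α β δ)) =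
      ((1 / 2 - (1 / 6) * (Real.cos β - 2 * Real.cos α * Real.cos β * Real.cos δ * Real.sin α +
        Real.cos δ * Real.sin (2 * α)) : ℝ) : ℂ) ∧
    star (totalVec α β δ) ⬝ᵥ (((1 : Matrix Q4 Q4 ℂ) - Pi2ext).mulVec (totalVec α β δ)) =
      ((1 / 2 + (1 / 6) * (Real.cos β - 2 * Real.cos α * Real.cos β * Real.cos δ * Real.sin α +
        Real.cos δ * Real.sin (2 * α)) : ℝ) : ℂ) := by
  refine ⟨first_prob α β δ, ?_⟩
  rw [Matrix.sub_mulVec, Matrix.one_mulVec, dotProduct_sub, first_prob α β δ,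
    totalVec_norm α β δ]
  push_cast
  ring
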